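/- Let R be a Noetherian commutative ring, and I an ideal of R. Then grade(I) ≤ height(I). -/

import Mathlib

open RingTheory.Sequence Pointwise

lemma not_mem_minimalPrimes_of_nonZeroDivisor {R : Type*} [CommRing R] {p : Ideal R}
    (hp : p ∈ minimalPrimes R) {r : R} (hr : r ∈ nonZeroDivisors R) : r ∉ p := by
  intro hrp
  haveI : p.IsPrime := hp.1.1
  have h1 : algebraMap R (Localization p.primeCompl) r ∈
      IsLocalRing.maximalIdeal (Localization p.primeCompl) :=
    (IsLocalization.AtPrime.to_map_mem_maximal_iff _ p r).mpr hrp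
  exact notMem_nonZeroDivisors_of_mem_mem_minimalPrimes hrp hp hr

lemma regular_quotient_of_cons {R : Type*} [CommRing R] {r : R} {rs : List R}
    (h : IsRegular R (r :: rs)) :
    IsRegular (R ⧸ Ideal.span {r}) (rs.map (Ideal.Quotient.mk (Ideal.span {r}))) := by
  rw [isRegular_cons_iff'] at h
  have heq : (r • (⊤ : Submodule R R)) = (Ideal.span {r} : Ideal R) := by
    rw [← Submodule.ideal_span_singleton_smul, smul_eq_mul, Ideal.mul_top]
  let e : QuotSMulTop r R ≃ₗ[R] R ⧸ Ideal.span {r} := Submodule.quotEquivOfEq _ _ heq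
  refine (AddEquiv.isRegular_congr (e := e.toAddEquiv) ?_).mp h.2
  refine List.forall₂_same.mpr ?_
  intro s hs x
  obtain ⟨b, rfl⟩ := Ideal.Quotient.mk_surjective s
  obtain ⟨y, rfl⟩ := Submodule.Quotient.mk_surjective _ x
  show e (Submodule.Quotient.mk (b • y)) = Ideal.Quotient.mk _ b • e (Submodule.Quotient.mk y)
  rw [Submodule.quotEquivOfEq_mk, Submodule.quotEquivOfEq_mk]
  rfl

lemma mem_nonZeroDivisors_of_isSMulRegular {R : Type*} [CommRing R] {r : R}
    (h : IsSMulRegular R r) : r ∈ nonZeroDivisors R := by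
  rw [mem_nonZeroDivisors_iff_right]
  intro x hx
  have : r • x = r • 0 := by simp [smul_eq_mul, mul_comm r x, hx]
  simpa using h this

universe u

lemma grade_key : ∀ (n : ℕ) {R : Type u} [CommRing R] (rs : List R), rs.length = n →
    RingTheory.Sequence.IsRegular R rs → ∀ (P : PrimeSpectrum R),
    (∀ x ∈ rs, x ∈ P.asIdeal) → (n : ℕ∞) ≤ Order.height P := by
  intro n
  induction n with
  | zero => intro R _ rs _ _ P _; simp
  | succ n ih =>
    intro R _ rs hlen hreg P hmem
    match rs, hlen with
    | r :: rs, hlen =>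
      have hlen' : rs.length = n := by simpa using hlen
      have hr : IsSMulRegular R r := ((isRegular_cons_iff R r rs).mp hreg).1
      have hrnz : r ∈ nonZeroDivisors R := mem_nonZeroDivisors_of_isSMulRegular hr
      set J : Ideal R := Ideal.span {r} with hJ
      have hJP : J ≤ P.asIdeal := by
        rw [hJ, Ideal.span_le, Set.singleton_subset_iff]
        exact hmem r List.mem_cons_self
      have hker : RingHom.ker (Ideal.Quotient.mk J) ≤ P.asIdeal := by
        rwa [Ideal.mk_ker]
      have hrs : IsRegular (R ⧸ J) (rs.map (Ideal.Quotient.mk J)) :=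
        regular_quotient_of_cons hreg
      haveI hP' : (P.asIdeal.map (Ideal.Quotient.mk J)).IsPrime :=
        Ideal.map_isPrime_of_surjective Ideal.Quotient.mk_surjective hker
      set P' : PrimeSpectrum (R ⧸ J) := ⟨P.asIdeal.map (Ideal.Quotient.mk J), hP'⟩ with hP'def
      have hmem' : ∀ x ∈ rs.map (Ideal.Quotient.mk J), x ∈ P'.asIdeal := by
        intro x hx
        obtain ⟨y, hy, rfl⟩ := List.mem_map.mp hx
        exact Ideal.mem_map_of_mem _ (hmem y (List.mem_cons_of_mem r hy))
      have hn : (n : ℕ∞) ≤ Order.height P' :=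
        ih (rs.map (Ideal.Quotient.mk J)) (by simpa using hlen') hrs P' hmem'
      obtain ⟨p, hlast, hplen⟩ := Order.exists_series_of_le_height P' hn
      -- map the series down to Spec R
      set f : PrimeSpectrum (R ⧸ J) → PrimeSpectrum R :=
        fun Q => ⟨Q.asIdeal.comap (Ideal.Quotient.mk J), inferInstance⟩ with hf
      have hfmono : StrictMono f := by
        have hinj : Function.Injective f := by
          intro a b hab
          ext1
          exact Ideal.comap_injective_of_surjective _ Ideal.Quotient.mk_surjective
            congr(($hab).asIdeal)
        have hmon : Monotone f := fun a b hab => Ideal.comap_mono hab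
        exact hmon.strictMono_of_injective hinj
      have hfP : f P' = P := by
        ext1
        show (P.asIdeal.map (Ideal.Quotient.mk J)).comap (Ideal.Quotient.mk J) = P.asIdeal
        rw [Ideal.comap_map_of_surjective _ Ideal.Quotient.mk_surjective,
          ← RingHom.ker_eq_comap_bot, Ideal.mk_ker, sup_eq_left]
        exact hJP
      set q := p.map f hfmono with hq
      have hrhead : r ∈ q.head.asIdeal := by
        show r ∈ (p.head.asIdeal.comap (Ideal.Quotient.mk J))
        rw [Ideal.mem_comap]
        have hz : (Ideal.Quotient.mk J) r = 0 :=
          Ideal.Quotient.eq_zero_iff_mem.mpr (Ideal.subset_span (Set.mem_singleton r))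
        rw [hz]
        exact (p.head.asIdeal).zero_mem
      obtain ⟨m, hm, hmle⟩ := Ideal.exists_minimalPrimes_le (I := (⊥ : Ideal R))
        (J := q.head.asIdeal) bot_le
      haveI : m.IsPrime := hm.1.1
      have hmlt : (⟨m, hm.1.1⟩ : PrimeSpectrum R) < q.head := by
        refine lt_of_le_of_ne hmle ?_
        intro hcontra
        have hme : m = q.head.asIdeal := congrArg PrimeSpectrum.asIdeal hcontra
        exact (not_mem_minimalPrimes_of_nonZeroDivisor hm hrnz) (hme ▸ hrhead)
      set q' := q.cons ⟨m, hm.1.1⟩ hmlt with hq'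
      have hlast' : q'.last = P := by
        rw [hq', RelSeries.last_cons, hq, LTSeries.last_map, hlast, hfP]
      have hlen'' : q'.length = n + 1 := by
        simp [hq', hq, hplen]
      calc ((n + 1 : ℕ) : ℕ∞) = (q'.length : ℕ∞) := by rw [hlen'']
        _ ≤ Order.height P := Order.length_le_height (le_of_eq hlast')


/-- The grade of an ideal: the supremum of the lengths of `R`-regular
sequences contained in the ideal. -/
noncomputable def idealGrade {R : Type*} [CommRing R] (I : Ideal R) : ℕ∞ :=
  ⨆ (rs : List R) (_ : ∀ x ∈ rs, x ∈ I) (_ : RingTheory.Sequence.IsRegular R rs),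
    (rs.length : ℕ∞)

/-- The height of an ideal: the infimum of the heights (in the poset of
primes) of the prime ideals containing it. -/
noncomputable def idealHeight {R : Type*} [CommRing R] (I : Ideal R) : ℕ∞ :=
  ⨅ (P : PrimeSpectrum R) (_ : I ≤ P.asIdeal), Order.height P

/-- In a Noetherian commutative ring, `grade I ≤ height I`. -/
theorem stmt_12 (R : Type*) [CommRing R] [IsNoetherianRing R] (I : Ideal R) :
    idealGrade I ≤ idealHeight I := by
  refine le_iInf fun P => le_iInf fun hP => iSup_le fun rs => iSup_le fun hmem =>
    iSup_le fun hreg => ?_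
  exact grade_key rs.length rs rfl hreg P (fun x hx => hP (hmem x hx))
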